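/- Let t be a t-structure on a triangulated category C. Then the full subcategory C_{t=-∞} with objects ⋂_{i∈ℤ} C_{t≤i} is a triangulated subcategory of C, and t restricts to it (the intersections of C_{t≤0} and C_{t≥0} with it form a t-structure on C_{t=-∞}). Moreover, if t is essentially bounded below (for every M, Hᵗ_i(M) = 0 for all i ≪ 0), then (C_{t=-∞}, C_+) is a semi-orthogonal decomposition of C, where C_+ is the full subcategory with objects ⋃_{i∈ℤ} C_{t≥i}: that is, Obj C_+ ⊥ Obj C_{t=-∞} and every object of C is an extension of an object of C_{t=-∞} by an object of C_+. -/

import Mathlib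

open CategoryTheory CategoryTheory.Limits CategoryTheory.Pretriangulated ZeroObject

universe w' v u

variable (C : Type u) [Category.{v} C] [HasZeroObject C] [HasShift C ℤ]
  [Preadditive C] [∀ n : ℤ, (shiftFunctor C n).Additive] [Pretriangulated C]

/-- A t-structure `t = (C_{t≤0}, C_{t≥0})` on a triangulated category, in the homological
convention of the paper.  `le` is the class `C_{t≤0}` and `ge` is the class `C_{t≥0}`.
The condition `C_{t≤0} ⊆ C_{t≤0}[1]` is encoded as `le X → le (X⟦-1⟧)` (the classes being
closed under isomorphism), and `C_{t≥0}[1] ⊆ C_{t≥0}` as `ge X → ge (X⟦1⟧)`.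
The class `C_{t≤i} = C_{t≤0}[i]` is `fun X => le (X⟦-i⟧)` and similarly for `C_{t≥i}`. -/
structure PaperTStructure where
  /-- the class `C_{t≤0}` -/
  le : C → Prop
  /-- the class `C_{t≥0}` -/
  ge : C → Prop
  le_iso : ∀ {X Y : C}, (X ≅ Y) → le X → le Y
  ge_iso : ∀ {X Y : C}, (X ≅ Y) → ge X → ge Y
  le_shift : ∀ X : C, le X → le (X⟦(-1 : ℤ)⟧)
  ge_shift : ∀ X : C, ge X → ge (X⟦(1 : ℤ)⟧)
  /-- `C_{t≥0}[1] ⊥ C_{t≤0}` -/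
  orth : ∀ (X Y : C), ge X → le Y → ∀ f : X⟦(1 : ℤ)⟧ ⟶ Y, f = 0
  /-- every object `M` admits a `t`-decomposition `L → M → R → L[1]` with `L ∈ C_{t≥0}`,
  `R ∈ C_{t≤0}[-1]` (i.e. `R⟦1⟧ ∈ C_{t≤0}`) -/
  decomp : ∀ M : C, ∃ (L R : C) (f : L ⟶ M) (g : M ⟶ R) (h : R ⟶ L⟦(1 : ℤ)⟧),
    (Triangle.mk f g h ∈ distTriang C) ∧ ge L ∧ le (R⟦(1 : ℤ)⟧)

/-- A weight structure `w = (C_{w≤0}, C_{w≥0})` on a triangulated category, in the homological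
convention of the paper.  `le` is the class `C_{w≤0}` and `ge` is the class `C_{w≥0}`;
both are retraction-closed.  `C_{w≤i} = C_{w≤0}[i]` is `fun X => le (X⟦-i⟧)`, similarly `ge`. -/
structure PaperWeightStructure where
  /-- the class `C_{w≤0}` -/
  le : C → Prop
  /-- the class `C_{w≥0}` -/
  ge : C → Prop
  le_retract : ∀ (X Y : C), le Y → (∃ (i : X ⟶ Y) (r : Y ⟶ X), i ≫ r = 𝟙 X) → le X
  ge_retract : ∀ (X Y : C), ge Y → (∃ (i : X ⟶ Y) (r : Y ⟶ X), i ≫ r = 𝟙 X) → ge X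
  le_shift : ∀ X : C, le X → le (X⟦(-1 : ℤ)⟧)
  ge_shift : ∀ X : C, ge X → ge (X⟦(1 : ℤ)⟧)
  /-- `C_{w≤0} ⊥ C_{w≥0}[1]` -/
  orth : ∀ (X Y : C), le X → ge Y → ∀ f : X ⟶ Y⟦(1 : ℤ)⟧, f = 0
  /-- every object `M` admits a weight decomposition `L → M → R → L[1]` with `L ∈ C_{w≤0}`,
  `R ∈ C_{w≥0}[1]` (i.e. `R⟦-1⟧ ∈ C_{w≥0}`) -/
  decomp : ∀ M : C, ∃ (L R : C) (f : L ⟶ M) (g : M ⟶ R) (h : R ⟶ L⟦(1 : ℤ)⟧),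
    (Triangle.mk f g h ∈ distTriang C) ∧ le L ∧ ge (R⟦(-1 : ℤ)⟧)

/-- A class of objects is extension-closed if it contains `0` and for every distinguished
triangle `X → Y → Z → X[1]` with `X, Z` in the class, `Y` lies in the class. -/
def ExtClosed (P : C → Prop) : Prop :=
  P (0 : C) ∧ ∀ T : Triangle C, (T ∈ distTriang C) → P T.obj₁ → P T.obj₃ → P T.obj₂

/-- A class of objects is retraction-closed if it contains all retracts of its elements. -/
def RetractClosed (P : C → Prop) : Prop :=
  ∀ X Y : C, P Y → (∃ (i : X ⟶ Y) (r : Y ⟶ X), i ≫ r = 𝟙 X) → P X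

/-- A (strictly full) triangulated subcategory, given by its class of objects: it contains
`0`, is closed under isomorphisms, shifts, and extensions. -/
def IsTriangSub (S : C → Prop) : Prop :=
  S (0 : C) ∧ (∀ {X Y : C}, (X ≅ Y) → S X → S Y) ∧
  (∀ (X : C) (n : ℤ), S X → S (X⟦n⟧)) ∧
  (∀ T : Triangle C, (T ∈ distTriang C) → S T.obj₁ → S T.obj₃ → S T.obj₂)

/-- A t-structure on the full (triangulated) subcategory whose class of objects is `S`. -/
structure RelTStructure (S : C → Prop) where
  le : C → Prop
  ge : C → Prop
  le_sub : ∀ X : C, le X → S X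
  ge_sub : ∀ X : C, ge X → S X
  le_iso : ∀ {X Y : C}, (X ≅ Y) → le X → le Y
  ge_iso : ∀ {X Y : C}, (X ≅ Y) → ge X → ge Y
  le_shift : ∀ X : C, le X → le (X⟦(-1 : ℤ)⟧)
  ge_shift : ∀ X : C, ge X → ge (X⟦(1 : ℤ)⟧)
  orth : ∀ (X Y : C), ge X → le Y → ∀ f : X⟦(1 : ℤ)⟧ ⟶ Y, f = 0
  decomp : ∀ M : C, S M → ∃ (L R : C) (f : L ⟶ M) (g : M ⟶ R) (h : R ⟶ L⟦(1 : ℤ)⟧),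
    (Triangle.mk f g h ∈ distTriang C) ∧ ge L ∧ le (R⟦(1 : ℤ)⟧)

/-- The class `⋂_{i ∈ ℤ} C_{t≤i}` (note `X ∈ C_{t≤i} ↔ X⟦-i⟧ ∈ C_{t≤0}`). -/
def NegInf (t : PaperTStructure C) : C → Prop := fun X => ∀ i : ℤ, t.le (X⟦i⟧)

section Aux

variable {C}

/-- Orthogonality reformulated: any map from `C_{t≥0}` to `C_{t≤-1}` vanishes. -/
lemma PaperTStructure.hom_zero (t : PaperTStructure C) {X Y : C} (hX : t.ge X)
    (hY : t.le (Y⟦(1 : ℤ)⟧)) (f : X ⟶ Y) : f = 0 := by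
  apply (shiftFunctor C (1 : ℤ)).map_injective
  rw [Functor.map_zero]
  exact t.orth X (Y⟦(1 : ℤ)⟧) hX hY (f⟦(1 : ℤ)⟧')

lemma PaperTStructure.le_down (t : PaperTStructure C) {X : C} (h : t.le (X⟦(1 : ℤ)⟧)) :
    t.le X :=
  t.le_iso ((shiftFunctorCompIsoId C (1 : ℤ) (-1 : ℤ) (by ring)).app X) (t.le_shift _ h)

/-- If in a `t`-decomposition triangle the first map vanishes, then the `C_{t≥0}` part is
zero and the map to the `C_{t≤-1}` part is an isomorphism. -/
lemma PaperTStructure.isZero_isIso_of_decomp (t : PaperTStructure C) {L M R : C}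
    {f : L ⟶ M} {g : M ⟶ R} {h : R ⟶ L⟦(1 : ℤ)⟧}
    (hT : Triangle.mk f g h ∈ distTriang C) (hL : t.ge L) (hR : t.le (R⟦(1 : ℤ)⟧))
    (hf : f = 0) : IsZero L ∧ IsIso g := by
  have leR : t.le R := t.le_down hR
  obtain ⟨s, hs⟩ := Triangle.coyoneda_exact₃ _ (rot_of_distTriang _ hT)
    (𝟙 (L⟦(1 : ℤ)⟧)) (by show 𝟙 (L⟦(1 : ℤ)⟧) ≫ (-(f⟦(1 : ℤ)⟧')) = 0; simp [hf])
  have hs0 : s = 0 := t.orth L R hL leR s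
  have hzL1 : IsZero (L⟦(1 : ℤ)⟧) := by
    rw [IsZero.iff_id_eq_zero, hs, hs0, zero_comp]; rfl
  have hzL : IsZero L := IsZero.of_iso
    ((shiftFunctor C (-1 : ℤ)).map_isZero hzL1)
    ((shiftFunctorCompIsoId C (1 : ℤ) (-1 : ℤ) (by ring)).app L).symm
  exact ⟨hzL, (Triangle.isZero₁_iff_isIso₂ _ hT).1 hzL⟩

lemma PaperTStructure.le_zero (t : PaperTStructure C) : t.le (0 : C) ∧ t.ge (0 : C) := by
  obtain ⟨L, R, f, g, h, hT, hL, hR⟩ := t.decomp (0 : C)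
  have hf : f = 0 := (isZero_zero C).eq_of_tgt f 0
  obtain ⟨hzL, hg⟩ := t.isZero_isIso_of_decomp hT hL hR hf
  have hzR : IsZero R := IsZero.of_iso (isZero_zero C) (asIso g).symm
  refine ⟨t.le_iso (((shiftFunctor C (1 : ℤ)).map_isZero hzR).iso (isZero_zero C)) hR,
    t.ge_iso (hzL.iso (isZero_zero C)) hL⟩

lemma negInf_iso (t : PaperTStructure C) {X Y : C} (e : X ≅ Y) (h : NegInf C t X) :
    NegInf C t Y := fun i => t.le_iso ((shiftFunctor C i).mapIso e) (h i)

lemma negInf_zero (t : PaperTStructure C) : NegInf C t (0 : C) := fun i =>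
  t.le_iso ((isZero_zero C).iso ((shiftFunctor C i).map_isZero (isZero_zero C))) t.le_zero.1

lemma negInf_isZero (t : PaperTStructure C) {X : C} (h : IsZero X) : NegInf C t X :=
  negInf_iso t ((isZero_zero C).iso h) (negInf_zero t)

lemma negInf_shift (t : PaperTStructure C) {X : C} (hX : NegInf C t X) (n : ℤ) :
    NegInf C t (X⟦n⟧) := fun i =>
  t.le_iso ((shiftFunctorAdd' C n i (n + i) rfl).app X) (hX (n + i))

lemma negInf_le (t : PaperTStructure C) {X : C} (hX : NegInf C t X) : t.le X :=
  t.le_iso ((shiftFunctorZero C ℤ).app X) (hX 0)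

lemma negInf_ext (t : PaperTStructure C) (T : Triangle C) (hT : T ∈ distTriang C)
    (h1 : NegInf C t T.obj₁) (h3 : NegInf C t T.obj₃) : NegInf C t T.obj₂ := by
  intro i
  have hTi := Triangle.shift_distinguished T hT i
  obtain ⟨L, R, f, g, h, hD, hL, hR⟩ := t.decomp (T.obj₂⟦i⟧)
  have hf : f = 0 := by
    have h2 : f ≫ ((Triangle.shiftFunctor C i).obj T).mor₂ = 0 :=
      t.hom_zero hL (negInf_shift t h3 i 1) _
    obtain ⟨g', hg'⟩ := Triangle.coyoneda_exact₂ _ hTi f h2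
    rw [hg', t.hom_zero hL (negInf_shift t h1 i 1) g']; exact zero_comp
  obtain ⟨hzL, hg⟩ := t.isZero_isIso_of_decomp hD hL hR hf
  exact t.le_iso (asIso g).symm (t.le_down hR)

end Aux

/-- for a t-structure `t` on `C`, the full subcategory `C_{t=-∞}` with objects
`⋂_{i∈ℤ} C_{t≤i}` is a triangulated subcategory and `t` restricts to it.  Moreover, if `t`
is essentially bounded below (for every `M` there is `m` such that `Hᵗ_i(M) = 0` for all
`i < m`, equivalently any choice of `t_{≤ m-1}M` lies in `C_{t=-∞}`), then
`(C_{t=-∞}, C_+)` is a semi-orthogonal decomposition of `C`, where `C_+` has objects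
`⋃_{i∈ℤ} C_{t≥i}`: `Obj C_+ ⊥ Obj C_{t=-∞}` and every object of `C` is an extension of an
object of `C_{t=-∞}` by an object of `C_+`. -/
theorem stmt18 (t : PaperTStructure C) :
    IsTriangSub C (NegInf C t) ∧
    (∃ t' : RelTStructure C (NegInf C t),
      (∀ X : C, t'.le X ↔ t.le X ∧ NegInf C t X) ∧
      (∀ X : C, t'.ge X ↔ t.ge X ∧ NegInf C t X)) ∧
    ((∀ M : C, ∃ m : ℤ, ∀ (L R : C) (f : L ⟶ M) (g : M ⟶ R) (h : R ⟶ L⟦(1 : ℤ)⟧),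
        (Triangle.mk f g h ∈ distTriang C) →
        t.ge (L⟦(-m : ℤ)⟧) → t.le (R⟦(1 - m : ℤ)⟧) → NegInf C t R) →
      ((∀ X Y : C, (∃ i : ℤ, t.ge (X⟦(-i : ℤ)⟧)) → NegInf C t Y → ∀ f : X ⟶ Y, f = 0) ∧
        (∀ M : C, ∃ (B A : C) (f : B ⟶ M) (g : M ⟶ A) (h : A ⟶ B⟦(1 : ℤ)⟧),
          (Triangle.mk f g h ∈ distTriang C) ∧
          (∃ i : ℤ, t.ge (B⟦(-i : ℤ)⟧)) ∧ NegInf C t A))) := by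
  refine ⟨⟨negInf_zero t, fun e h => negInf_iso t e h, fun X n h => negInf_shift t h n,
    fun T hT h1 h3 => negInf_ext t T hT h1 h3⟩, ?_, ?_⟩
  · refine ⟨{
      le := NegInf C t
      ge := fun X => t.ge X ∧ NegInf C t X
      le_sub := fun X h => h
      ge_sub := fun X h => h.2
      le_iso := fun e h => negInf_iso t e h
      ge_iso := fun e h => ⟨t.ge_iso e h.1, negInf_iso t e h.2⟩
      le_shift := fun X h => negInf_shift t h (-1)
      ge_shift := fun X h => ⟨t.ge_shift X h.1, negInf_shift t h.2 1⟩
      orth := fun X Y hX hY f => t.orth X Y hX.1 (negInf_le t hY) f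
      decomp := fun M hM => by
        obtain ⟨L, R, f, g, h, hD, hL, hR⟩ := t.decomp M
        have hf : f = 0 := t.hom_zero hL (hM 1) f
        obtain ⟨hzL, hg⟩ := t.isZero_isIso_of_decomp hD hL hR hf
        exact ⟨L, R, f, g, h, hD, ⟨hL, negInf_isZero t hzL⟩,
          negInf_shift t (negInf_iso t (asIso g) hM) 1⟩ }, ?_, ?_⟩
    · exact fun X => ⟨fun h => ⟨negInf_le t h, h⟩, fun h => h.2⟩
    · exact fun X => Iff.rfl
  · intro H
    constructor
    · rintro X Y ⟨i, hgi⟩ hY f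
      have h0 : ((shiftFunctorAdd' C (-i) 1 (1 - i) (by ring)).symm.app X).hom ≫
          f⟦(1 - i : ℤ)⟧' = 0 :=
        t.orth (X⟦(-i : ℤ)⟧) (Y⟦(1 - i : ℤ)⟧) hgi (hY (1 - i))
          (((shiftFunctorAdd' C (-i) 1 (1 - i) (by ring)).symm.app X).hom ≫
            f⟦(1 - i : ℤ)⟧')
      apply (shiftFunctor C (1 - i : ℤ)).map_injective
      rw [Functor.map_zero]
      rw [← cancel_epi (((shiftFunctorAdd' C (-i) 1 (1 - i) (by ring)).symm.app X).hom),
        h0, comp_zero]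
    · intro M
      obtain ⟨m, hm⟩ := H M
      obtain ⟨L, R, f, g, h, hD, hL, hR⟩ := t.decomp (M⟦(-m : ℤ)⟧)
      have hTi := Triangle.shift_distinguished _ hD m
      set T' := (Triangle.shiftFunctor C m).obj (Triangle.mk f g h) with hT'
      set e : (M⟦(-m : ℤ)⟧)⟦m⟧ ≅ M := (shiftFunctorCompIsoId C (-m : ℤ) m (by ring)).app M
      set T₂ : Triangle C := Triangle.mk (T'.mor₁ ≫ e.hom) (e.inv ≫ T'.mor₂) T'.mor₃
        with hT₂
      have hD₂ : T₂ ∈ distTriang C := by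
        refine isomorphic_distinguished _ hTi _ ?_
        refine Triangle.isoMk _ _ (Iso.refl _) e.symm (Iso.refl _) ?_ ?_ ?_
        · dsimp [T₂, T']; exact (Category.assoc _ _ _).trans ((congrArg (T'.mor₁ ≫ ·) e.hom_inv_id).trans
            ((Category.comp_id _).trans (Category.id_comp _).symm))
        · dsimp [T₂, T']; show (e.inv ≫ T'.mor₂) ≫ 𝟙 _ = e.inv ≫ T'.mor₂; simp
        · dsimp [T₂, T']; show T'.mor₃ ≫ (shiftFunctor C (1 : ℤ)).map (𝟙 _) = 𝟙 _ ≫ T'.mor₃; simp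
      have hgeL : t.ge ((L⟦m⟧)⟦(-m : ℤ)⟧) :=
        t.ge_iso ((shiftFunctorCompIsoId C m (-m : ℤ) (by ring)).app L).symm hL
      have hleR : t.le ((R⟦m⟧)⟦(1 - m : ℤ)⟧) :=
        t.le_iso ((shiftFunctorAdd' C m (1 - m) 1 (by ring)).app R) hR
      have hNegR : NegInf C t (R⟦m⟧) :=
        hm (L⟦m⟧) (R⟦m⟧) T₂.mor₁ T₂.mor₂ T₂.mor₃ hD₂ hgeL hleR
      exact ⟨L⟦m⟧, R⟦m⟧, T₂.mor₁, T₂.mor₂, T₂.mor₃, hD₂, ⟨m, hgeL⟩, hNegR⟩
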